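/- Let α₁, α₂, α₃ ∈ ℝ be pairwise distinct and let L, R ∈ ℝ satisfy L − αᵢ > 0 and R − αᵢ > 0 for i = 1, 2, 3; let δ₊, δ₋ ∈ ℝ. Set Γ₁ = α₂−α₃, Γ₂ = α₃−α₁, Γ₃ = α₁−α₂, and for j = 1, 2 set p_j = (1/2)·[ln(L−α_{j+1}) + ln(R−α_{j+1}) − ln(L−α_{j+2}) − ln(R−α_{j+2})] and q_j = (1/2)·[ln(L−α_{j+1}) − ln(R−α_{j+1}) − ln(L−α_{j+2}) + ln(R−α_{j+2})], indices of α taken modulo 3. Define u : ℤ² → ℝ by u(n₁,n₂) = exp(δ₊ − n₁p₁ − n₂p₂)/cosh(δ₋ − n₁q₁ − n₂q₂). If for every n ∈ ℤ² and i = 1, 2, 3 the differences u(n) − u(n+gᵢ) and u(n) − u(n−gᵢ) are nonzero, then u satisfies the triangular field equations (with ℝ in place of ℂ) with constants Γ₁, Γ₂, Γ₃: this is the one-soliton solution on the triangular lattice. -/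

import Mathlib

/-- The three triangular-lattice vectors in `ℤ²`. -/
def gTL : Fin 3 → ℤ × ℤ := ![(1, 0), (0, 1), (-1, -1)]

/-- `u : ℤ² → ℝ` satisfies the (real) triangular field equations with constants `Γ`. -/
def TriangularEqsR (Γ : Fin 3 → ℝ) (u : ℤ × ℤ → ℝ) : Prop :=
  ∀ m : ℤ × ℤ,
    (∀ i : Fin 3, u m - u (m + gTL i) ≠ 0 ∧ u m - u (m - gTL i) ≠ 0) ∧
    ∑ i : Fin 3, Γ i * (1 / (u m - u (m + gTL i)) + 1 / (u m - u (m - gTL i))) = 0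

lemma aux3TL (x N D : ℝ) (hx : 0 < x) (hN : 0 < N) (_hD : 0 < D) (hd : N - x*D ≠ 0) :
    1/(2/x - 2/(N/D)) = x*N/(2*(N - x*D)) := by
  rw [div_div_eq_mul_div, div_sub_div _ _ hx.ne' hN.ne', one_div_div,
    show 2*N - x*(2*D) = 2*(N - x*D) from by ring]

lemma nd3TL (x N D : ℝ) (_hx : 0 < x) (_hN : 0 < N) (hD : 0 < D)
    (h : 2/x - 2/(N/D) ≠ 0) : N - x*D ≠ 0 := by
  intro hd
  apply h
  rw [show N = x*D by linarith, mul_div_assoc, div_self hD.ne', mul_one, sub_self]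

set_option maxHeartbeats 4000000 in
lemma keyTL (A B a0 a1 a2 b0 b1 b2 g0 g1 g2 : ℝ)
    (hA : 0 < A) (hB : 0 < B) (ha0 : 0 < a0) (ha1 : 0 < a1) (ha2 : 0 < a2)
    (hb0 : 0 < b0) (hb1 : 0 < b1) (hb2 : 0 < b2)
    (h1 : a1 - b1 = a0 - b0) (h2 : a2 - b2 = a0 - b0)
    (hg0 : g0 = a2 - a1) (hg1 : g1 = a0 - a2) (hg2 : g2 = a1 - a0)
    (h0p : 2/(A+B) - 2/(A*(b1/b2)+B*(a1/a2)) ≠ 0)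
    (h0m : 2/(A+B) - 2/(A*(b2/b1)+B*(a2/a1)) ≠ 0)
    (h1p : 2/(A+B) - 2/(A*(b2/b0)+B*(a2/a0)) ≠ 0)
    (h1m : 2/(A+B) - 2/(A*(b0/b2)+B*(a0/a2)) ≠ 0)
    (h2p : 2/(A+B) - 2/(A*(b0/b1)+B*(a0/a1)) ≠ 0)
    (h2m : 2/(A+B) - 2/(A*(b1/b0)+B*(a1/a0)) ≠ 0) :
    g0 * (1/(2/(A+B) - 2/(A*(b1/b2)+B*(a1/a2))) + 1/(2/(A+B) - 2/(A*(b2/b1)+B*(a2/a1))))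
    + g1 * (1/(2/(A+B) - 2/(A*(b2/b0)+B*(a2/a0))) + 1/(2/(A+B) - 2/(A*(b0/b2)+B*(a0/a2))))
    + g2 * (1/(2/(A+B) - 2/(A*(b0/b1)+B*(a0/a1))) + 1/(2/(A+B) - 2/(A*(b1/b0)+B*(a1/a0)))) = 0 := by
  subst hg0 hg1 hg2
  have hAB : 0 < A + B := by linarith
  have E : ∀ r s t w : ℝ, 0 < s → 0 < w →
      A*(r/s) + B*(t/w) = (A*r*w + B*t*s)/(s*w) := by
    intro r s t w hs hw; field_simp
  rw [E _ _ _ _ hb2 ha2, E _ _ _ _ hb1 ha1, E _ _ _ _ hb0 ha0, E _ _ _ _ hb2 ha2,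
    E _ _ _ _ hb1 ha1, E _ _ _ _ hb0 ha0] at *
  have N0p : 0 < A*b1*a2 + B*a1*b2 := by positivity
  have N0m : 0 < A*b2*a1 + B*a2*b1 := by positivity
  have N1p : 0 < A*b2*a0 + B*a2*b0 := by positivity
  have N1m : 0 < A*b0*a2 + B*a0*b2 := by positivity
  have N2p : 0 < A*b0*a1 + B*a0*b1 := by positivity
  have N2m : 0 < A*b1*a0 + B*a1*b0 := by positivity
  have D0p : 0 < b2*a2 := by positivity
  have D0m : 0 < b1*a1 := by positivity
  have D1p : 0 < b0*a0 := by positivity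
  have d0p := nd3TL _ _ _ hAB N0p D0p h0p
  have d0m := nd3TL _ _ _ hAB N0m D0m h0m
  have d1p := nd3TL _ _ _ hAB N1p D1p h1p
  have d1m := nd3TL _ _ _ hAB N1m D0p h1m
  have d2p := nd3TL _ _ _ hAB N2p D0m h2p
  have d2m := nd3TL _ _ _ hAB N2m D1p h2m
  rw [aux3TL _ _ _ hAB N0p D0p d0p, aux3TL _ _ _ hAB N0m D0m d0m,
    aux3TL _ _ _ hAB N1p D1p d1p, aux3TL _ _ _ hAB N1m D0p d1m,
    aux3TL _ _ _ hAB N2p D0m d2p, aux3TL _ _ _ hAB N2m D1p d2m]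
  have hb1' : b1 = a1 - (a0 - b0) := by linarith
  have hb2' : b2 = a2 - (a0 - b0) := by linarith
  subst hb1' hb2'
  rw [div_add_div _ _ (mul_ne_zero two_ne_zero d0p) (mul_ne_zero two_ne_zero d0m),
    div_add_div _ _ (mul_ne_zero two_ne_zero d1p) (mul_ne_zero two_ne_zero d1m),
    div_add_div _ _ (mul_ne_zero two_ne_zero d2p) (mul_ne_zero two_ne_zero d2m),
    mul_div_assoc', mul_div_assoc', mul_div_assoc',
    div_add_div _ _ (by positivity) (by positivity), div_add_div _ _ (by positivity) (by positivity),
    div_eq_zero_iff]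
  left
  ring

lemma coshdivTL (P Q : ℝ) :
    Real.exp P / Real.cosh Q = 2/(Real.exp (Q-P) + Real.exp (-(Q+P))) := by
  have key : Real.exp P * (Real.exp (Q-P) + Real.exp (-(Q+P)))
      = Real.exp Q + Real.exp (-Q) := by
    rw [mul_add, ← Real.exp_add, ← Real.exp_add, show P + (Q-P) = Q from by ring,
      show P + -(Q+P) = -Q from by ring]
  have h1 : (0:ℝ) < Real.exp (Q-P) + Real.exp (-(Q+P)) := by positivity
  have h2 : (0:ℝ) < Real.cosh Q := Real.cosh_pos Q
  rw [div_eq_div_iff h2.ne' h1.ne', key, Real.cosh_eq]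
  ring

lemma neighborTL (dp dm p1 p2 q1 q2 A B X Y c1 c2 d1 d2 : ℝ)
    (hA : A = Real.exp (dm - c1*q1 - c2*q2 - (dp - c1*p1 - c2*p2)))
    (hB : B = Real.exp (-(dm - c1*q1 - c2*q2 + (dp - c1*p1 - c2*p2))))
    (hX : Real.exp ((c1 - d1)*(q1 - p1) + (c2 - d2)*(q2 - p2)) = X)
    (hY : Real.exp ((d1 - c1)*(q1 + p1) + (d2 - c2)*(q2 + p2)) = Y) :
    Real.exp (dp - d1*p1 - d2*p2) / Real.cosh (dm - d1*q1 - d2*q2) = 2/(A*X + B*Y) := by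
  subst hA hB hX hY
  rw [← Real.exp_add, ← Real.exp_add, coshdivTL]
  rw [show dm - c1*q1 - c2*q2 - (dp - c1*p1 - c2*p2)
        + ((c1 - d1)*(q1 - p1) + (c2 - d2)*(q2 - p2))
      = (dm - d1*q1 - d2*q2) - (dp - d1*p1 - d2*p2) from by ring]
  rw [show -(dm - c1*q1 - c2*q2 + (dp - c1*p1 - c2*p2))
        + ((d1 - c1)*(q1 + p1) + (d2 - c2)*(q2 + p2))
      = -((dm - d1*q1 - d2*q2) + (dp - d1*p1 - d2*p2)) from by ring]

set_option maxHeartbeats 1600000 in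
theorem stmt19 (α : Fin 3 → ℝ) (hα : Function.Injective α)
    (L R : ℝ) (hL : ∀ i : Fin 3, 0 < L - α i) (hR : ∀ i : Fin 3, 0 < R - α i)
    (dp dm : ℝ) (p1 p2 q1 q2 : ℝ)
    (hp1 : p1 = (Real.log (L - α 1) + Real.log (R - α 1)
      - Real.log (L - α 2) - Real.log (R - α 2)) / 2)
    (hq1 : q1 = (Real.log (L - α 1) - Real.log (R - α 1)
      - Real.log (L - α 2) + Real.log (R - α 2)) / 2)
    (hp2 : p2 = (Real.log (L - α 2) + Real.log (R - α 2)
      - Real.log (L - α 0) - Real.log (R - α 0)) / 2)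
    (hq2 : q2 = (Real.log (L - α 2) - Real.log (R - α 2)
      - Real.log (L - α 0) + Real.log (R - α 0)) / 2)
    (u : ℤ × ℤ → ℝ)
    (hu : ∀ n : ℤ × ℤ,
      u n = Real.exp (dp - (n.1 : ℝ) * p1 - (n.2 : ℝ) * p2)
        / Real.cosh (dm - (n.1 : ℝ) * q1 - (n.2 : ℝ) * q2))
    (hne : ∀ (n : ℤ × ℤ) (i : Fin 3),
      u n - u (n + gTL i) ≠ 0 ∧ u n - u (n - gTL i) ≠ 0) :
    TriangularEqsR ![α 1 - α 2, α 2 - α 0, α 0 - α 1] u := by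
  have g0 : gTL 0 = ((1 : ℤ), (0 : ℤ)) := rfl
  have g1 : gTL 1 = ((0 : ℤ), (1 : ℤ)) := rfl
  have g2 : gTL 2 = ((-1 : ℤ), (-1 : ℤ)) := rfl
  refine fun m => ⟨hne m, ?_⟩
  set A := Real.exp (dm - (m.1:ℝ)*q1 - (m.2:ℝ)*q2 - (dp - (m.1:ℝ)*p1 - (m.2:ℝ)*p2)) with hA
  set B := Real.exp (-(dm - (m.1:ℝ)*q1 - (m.2:ℝ)*q2 + (dp - (m.1:ℝ)*p1 - (m.2:ℝ)*p2)))
    with hB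
  -- component facts
  have e0p1 : (((m + gTL 0).1 : ℤ) : ℝ) = (m.1:ℝ) + 1 := by
    rw [g0, Prod.fst_add]; push_cast; ring
  have e0p2 : (((m + gTL 0).2 : ℤ) : ℝ) = (m.2:ℝ) := by
    rw [g0, Prod.snd_add]; push_cast; ring
  have e0m1 : (((m - gTL 0).1 : ℤ) : ℝ) = (m.1:ℝ) - 1 := by
    rw [g0, Prod.fst_sub]; push_cast; ring
  have e0m2 : (((m - gTL 0).2 : ℤ) : ℝ) = (m.2:ℝ) := by
    rw [g0, Prod.snd_sub]; push_cast; ring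
  have e1p1 : (((m + gTL 1).1 : ℤ) : ℝ) = (m.1:ℝ) := by
    rw [g1, Prod.fst_add]; push_cast; ring
  have e1p2 : (((m + gTL 1).2 : ℤ) : ℝ) = (m.2:ℝ) + 1 := by
    rw [g1, Prod.snd_add]; push_cast; ring
  have e1m1 : (((m - gTL 1).1 : ℤ) : ℝ) = (m.1:ℝ) := by
    rw [g1, Prod.fst_sub]; push_cast; ring
  have e1m2 : (((m - gTL 1).2 : ℤ) : ℝ) = (m.2:ℝ) - 1 := by
    rw [g1, Prod.snd_sub]; push_cast; ring
  have e2p1 : (((m + gTL 2).1 : ℤ) : ℝ) = (m.1:ℝ) - 1 := by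
    rw [g2, Prod.fst_add]; push_cast; ring
  have e2p2 : (((m + gTL 2).2 : ℤ) : ℝ) = (m.2:ℝ) - 1 := by
    rw [g2, Prod.snd_add]; push_cast; ring
  have e2m1 : (((m - gTL 2).1 : ℤ) : ℝ) = (m.1:ℝ) + 1 := by
    rw [g2, Prod.fst_sub]; push_cast; ring
  have e2m2 : (((m - gTL 2).2 : ℤ) : ℝ) = (m.2:ℝ) + 1 := by
    rw [g2, Prod.snd_sub]; push_cast; ring
  -- the seven values of u
  have hu0 : u m = 2/(A + B) := by
    rw [hu m, neighborTL dp dm p1 p2 q1 q2 A B 1 1 (m.1:ℝ) (m.2:ℝ) (m.1:ℝ) (m.2:ℝ) hA hB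
      (by rw [show ((m.1:ℝ) - (m.1:ℝ))*(q1 - p1) + ((m.2:ℝ) - (m.2:ℝ))*(q2 - p2) = 0
            from by ring, Real.exp_zero])
      (by rw [show ((m.1:ℝ) - (m.1:ℝ))*(q1 + p1) + ((m.2:ℝ) - (m.2:ℝ))*(q2 + p2) = 0
            from by ring, Real.exp_zero]), mul_one, mul_one]
  have h0p : u (m + gTL 0) = 2/(A*((R - α 1)/(R - α 2)) + B*((L - α 1)/(L - α 2))) := by
    rw [hu (m + gTL 0)]
    refine neighborTL dp dm p1 p2 q1 q2 A B _ _ (m.1:ℝ) (m.2:ℝ) _ _ hA hB ?_ ?_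
    · rw [show ((m.1:ℝ) - (((m + gTL 0).1 : ℤ):ℝ))*(q1 - p1)
            + ((m.2:ℝ) - (((m + gTL 0).2 : ℤ):ℝ))*(q2 - p2)
          = Real.log (R - α 1) - Real.log (R - α 2) from by
        rw [e0p1, e0p2, hp1, hq1, hp2, hq2]; ring,
        Real.exp_sub, Real.exp_log (hR 1), Real.exp_log (hR 2)]
    · rw [show ((((m + gTL 0).1 : ℤ):ℝ) - (m.1:ℝ))*(q1 + p1)
            + ((((m + gTL 0).2 : ℤ):ℝ) - (m.2:ℝ))*(q2 + p2)
          = Real.log (L - α 1) - Real.log (L - α 2) from by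
        rw [e0p1, e0p2, hp1, hq1, hp2, hq2]; ring,
        Real.exp_sub, Real.exp_log (hL 1), Real.exp_log (hL 2)]
  have h0m : u (m - gTL 0) = 2/(A*((R - α 2)/(R - α 1)) + B*((L - α 2)/(L - α 1))) := by
    rw [hu (m - gTL 0)]
    refine neighborTL dp dm p1 p2 q1 q2 A B _ _ (m.1:ℝ) (m.2:ℝ) _ _ hA hB ?_ ?_
    · rw [show ((m.1:ℝ) - (((m - gTL 0).1 : ℤ):ℝ))*(q1 - p1)
            + ((m.2:ℝ) - (((m - gTL 0).2 : ℤ):ℝ))*(q2 - p2)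
          = Real.log (R - α 2) - Real.log (R - α 1) from by
        rw [e0m1, e0m2, hp1, hq1, hp2, hq2]; ring,
        Real.exp_sub, Real.exp_log (hR 2), Real.exp_log (hR 1)]
    · rw [show ((((m - gTL 0).1 : ℤ):ℝ) - (m.1:ℝ))*(q1 + p1)
            + ((((m - gTL 0).2 : ℤ):ℝ) - (m.2:ℝ))*(q2 + p2)
          = Real.log (L - α 2) - Real.log (L - α 1) from by
        rw [e0m1, e0m2, hp1, hq1, hp2, hq2]; ring,
        Real.exp_sub, Real.exp_log (hL 2), Real.exp_log (hL 1)]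
  have h1p : u (m + gTL 1) = 2/(A*((R - α 2)/(R - α 0)) + B*((L - α 2)/(L - α 0))) := by
    rw [hu (m + gTL 1)]
    refine neighborTL dp dm p1 p2 q1 q2 A B _ _ (m.1:ℝ) (m.2:ℝ) _ _ hA hB ?_ ?_
    · rw [show ((m.1:ℝ) - (((m + gTL 1).1 : ℤ):ℝ))*(q1 - p1)
            + ((m.2:ℝ) - (((m + gTL 1).2 : ℤ):ℝ))*(q2 - p2)
          = Real.log (R - α 2) - Real.log (R - α 0) from by
        rw [e1p1, e1p2, hp1, hq1, hp2, hq2]; ring,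
        Real.exp_sub, Real.exp_log (hR 2), Real.exp_log (hR 0)]
    · rw [show ((((m + gTL 1).1 : ℤ):ℝ) - (m.1:ℝ))*(q1 + p1)
            + ((((m + gTL 1).2 : ℤ):ℝ) - (m.2:ℝ))*(q2 + p2)
          = Real.log (L - α 2) - Real.log (L - α 0) from by
        rw [e1p1, e1p2, hp1, hq1, hp2, hq2]; ring,
        Real.exp_sub, Real.exp_log (hL 2), Real.exp_log (hL 0)]
  have h1m : u (m - gTL 1) = 2/(A*((R - α 0)/(R - α 2)) + B*((L - α 0)/(L - α 2))) := by
    rw [hu (m - gTL 1)]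
    refine neighborTL dp dm p1 p2 q1 q2 A B _ _ (m.1:ℝ) (m.2:ℝ) _ _ hA hB ?_ ?_
    · rw [show ((m.1:ℝ) - (((m - gTL 1).1 : ℤ):ℝ))*(q1 - p1)
            + ((m.2:ℝ) - (((m - gTL 1).2 : ℤ):ℝ))*(q2 - p2)
          = Real.log (R - α 0) - Real.log (R - α 2) from by
        rw [e1m1, e1m2, hp1, hq1, hp2, hq2]; ring,
        Real.exp_sub, Real.exp_log (hR 0), Real.exp_log (hR 2)]
    · rw [show ((((m - gTL 1).1 : ℤ):ℝ) - (m.1:ℝ))*(q1 + p1)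
            + ((((m - gTL 1).2 : ℤ):ℝ) - (m.2:ℝ))*(q2 + p2)
          = Real.log (L - α 0) - Real.log (L - α 2) from by
        rw [e1m1, e1m2, hp1, hq1, hp2, hq2]; ring,
        Real.exp_sub, Real.exp_log (hL 0), Real.exp_log (hL 2)]
  have h2p : u (m + gTL 2) = 2/(A*((R - α 0)/(R - α 1)) + B*((L - α 0)/(L - α 1))) := by
    rw [hu (m + gTL 2)]
    refine neighborTL dp dm p1 p2 q1 q2 A B _ _ (m.1:ℝ) (m.2:ℝ) _ _ hA hB ?_ ?_
    · rw [show ((m.1:ℝ) - (((m + gTL 2).1 : ℤ):ℝ))*(q1 - p1)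
            + ((m.2:ℝ) - (((m + gTL 2).2 : ℤ):ℝ))*(q2 - p2)
          = Real.log (R - α 0) - Real.log (R - α 1) from by
        rw [e2p1, e2p2, hp1, hq1, hp2, hq2]; ring,
        Real.exp_sub, Real.exp_log (hR 0), Real.exp_log (hR 1)]
    · rw [show ((((m + gTL 2).1 : ℤ):ℝ) - (m.1:ℝ))*(q1 + p1)
            + ((((m + gTL 2).2 : ℤ):ℝ) - (m.2:ℝ))*(q2 + p2)
          = Real.log (L - α 0) - Real.log (L - α 1) from by
        rw [e2p1, e2p2, hp1, hq1, hp2, hq2]; ring,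
        Real.exp_sub, Real.exp_log (hL 0), Real.exp_log (hL 1)]
  have h2m : u (m - gTL 2) = 2/(A*((R - α 1)/(R - α 0)) + B*((L - α 1)/(L - α 0))) := by
    rw [hu (m - gTL 2)]
    refine neighborTL dp dm p1 p2 q1 q2 A B _ _ (m.1:ℝ) (m.2:ℝ) _ _ hA hB ?_ ?_
    · rw [show ((m.1:ℝ) - (((m - gTL 2).1 : ℤ):ℝ))*(q1 - p1)
            + ((m.2:ℝ) - (((m - gTL 2).2 : ℤ):ℝ))*(q2 - p2)
          = Real.log (R - α 1) - Real.log (R - α 0) from by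
        rw [e2m1, e2m2, hp1, hq1, hp2, hq2]; ring,
        Real.exp_sub, Real.exp_log (hR 1), Real.exp_log (hR 0)]
    · rw [show ((((m - gTL 2).1 : ℤ):ℝ) - (m.1:ℝ))*(q1 + p1)
            + ((((m - gTL 2).2 : ℤ):ℝ) - (m.2:ℝ))*(q2 + p2)
          = Real.log (L - α 1) - Real.log (L - α 0) from by
        rw [e2m1, e2m2, hp1, hq1, hp2, hq2]; ring,
        Real.exp_sub, Real.exp_log (hL 1), Real.exp_log (hL 0)]
  -- nonvanishing hypotheses
  have n0p := (hne m 0).1; rw [hu0, h0p] at n0p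
  have n0m := (hne m 0).2; rw [hu0, h0m] at n0m
  have n1p := (hne m 1).1; rw [hu0, h1p] at n1p
  have n1m := (hne m 1).2; rw [hu0, h1m] at n1m
  have n2p := (hne m 2).1; rw [hu0, h2p] at n2p
  have n2m := (hne m 2).2; rw [hu0, h2m] at n2m
  rw [Fin.sum_univ_three]
  simp only [Matrix.cons_val_zero, Matrix.cons_val_one, Matrix.head_cons,
    Matrix.cons_val_two, Matrix.tail_cons]
  rw [hu0, h0p, h0m, h1p, h1m, h2p, h2m]
  exact keyTL A B (L - α 0) (L - α 1) (L - α 2) (R - α 0) (R - α 1) (R - α 2)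
    (α 1 - α 2) (α 2 - α 0) (α 0 - α 1)
    (Real.exp_pos _) (Real.exp_pos _) (hL 0) (hL 1) (hL 2) (hR 0) (hR 1) (hR 2)
    (by ring) (by ring) (by ring) (by ring) (by ring)
    n0p n0m n1p n1m n2p n2m
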